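/- Let G be a connected graph with minimum degree at least 3. If Z(G) = 3, then the edge connectivity of G is at least 3. -/

import Mathlib

open Matrix Finset

variable {V : Type*}

/-- `A` is a real symmetric matrix whose off-diagonal nonzero pattern is given by `G`. -/
def IsGraphMatrix [Fintype V] (G : SimpleGraph V) (A : Matrix V V ℝ) : Prop :=
  A.IsSymm ∧ ∀ i j : V, i ≠ j → (A i j ≠ 0 ↔ G.Adj i j)

/-- The nullity of a square real matrix. -/
noncomputable def nullity [Fintype V] (A : Matrix V V ℝ) : ℕ :=
  Fintype.card V - A.rank

/-- The minimum rank of a graph. -/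
noncomputable def minRank [Fintype V] (G : SimpleGraph V) : ℕ :=
  sInf {r : ℕ | ∃ A : Matrix V V ℝ, IsGraphMatrix G A ∧ A.rank = r}

/-- The maximum nullity of a graph. -/
noncomputable def maxNullity [Fintype V] (G : SimpleGraph V) : ℕ :=
  sSup {k : ℕ | ∃ A : Matrix V V ℝ, IsGraphMatrix G A ∧ nullity A = k}

/-- The set of vertices eventually colored black by the color-change rule,
starting from the initially black set `Z`. A black vertex `u` with exactly one
white neighbor `v` forces `v` black. -/
inductive ZForced (G : SimpleGraph V) (Z : Set V) : V → Prop
  | init : ∀ {v}, v ∈ Z → ZForced G Z v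
  | force : ∀ {u v}, G.Adj u v → ZForced G Z u →
      (∀ w, G.Adj u w → w ≠ v → ZForced G Z w) → ZForced G Z v

/-- `Z` is a zero forcing set for `G`. -/
def IsZeroForcingSet (G : SimpleGraph V) (Z : Set V) : Prop :=
  ∀ v : V, ZForced G Z v

/-- The zero forcing number of `G`. -/
noncomputable def zeroForcingNumber [Fintype V] (G : SimpleGraph V) : ℕ :=
  sInf {k : ℕ | ∃ Z : Finset V, Z.card = k ∧ IsZeroForcingSet G ↑Z}

/-- The edge connectivity of `G`: the least number of edges whose deletion
disconnects `G`. -/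
noncomputable def edgeConnectivity [Fintype V] (G : SimpleGraph V) : ℕ :=
  sInf {k : ℕ | ∃ F : Finset (Sym2 V), F.card = k ∧ ↑F ⊆ G.edgeSet ∧
    ¬(G.deleteEdges ↑F).Connected}

namespace ZFAux

universe u

/-- "First force" lemma: if some vertex outside `S` is forced, then there is a
vertex `u ∈ S` with all neighbors but one in `S`. -/
lemma ff {W : Type u} {G : SimpleGraph W} {S : Set W}
    (hex : ∃ v, v ∉ S ∧ ZForced G S v) :
    ∃ u v, u ∈ S ∧ v ∉ S ∧ G.Adj u v ∧ ∀ w, G.Adj u w → w ≠ v → w ∈ S := by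
  by_contra hno
  push_neg at hno
  obtain ⟨v, hv, hforced⟩ := hex
  have key : ∀ x, ZForced G S x → x ∈ S := by
    intro x h
    induction h with
    | init h => exact h
    | @force u v hadj hu hws ihu ihws =>
        by_cases hvS : v ∈ S
        · exact hvS
        · exact absurd (fun w hw hwv => ihws w hw hwv)
            (by simpa using hno u v ihu hvS hadj)
  exact hv (key v hforced)

/-- Transport of forcing to an induced subgraph, when all "entry points" are seeds. -/
lemma zf_restrict {W : Type u} {G : SimpleGraph W} {B : Set W} {X : Set W} {S : Set ↥X}
    (hBS : ∀ v (hv : v ∈ X), v ∈ B → (⟨v, hv⟩ : ↥X) ∈ S)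
    (hXS : ∀ v (hv : v ∈ X), (∃ w, w ∉ X ∧ G.Adj v w) → (⟨v, hv⟩ : ↥X) ∈ S)
    {v : W} (h : ZForced G B v) :
    ∀ hv : v ∈ X, ZForced (G.induce X) S ⟨v, hv⟩ := by
  induction h with
  | init h => exact fun hv => .init (hBS _ hv h)
  | @force u v hadj hu hws ihu ihws =>
      intro hv
      by_cases huX : u ∈ X
      · refine ZForced.force (u := ⟨u, huX⟩) (by simpa using hadj) (ihu huX) ?_
        rintro ⟨w, hwX⟩ hw hne
        exact ihws w (by simpa using hw) (fun h => hne (Subtype.ext h)) hwX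
      · exact .init (hXS v hv ⟨u, huX, hadj.symm⟩)

/-- Deleting a vertex `u` all of whose neighbors except `v0` lie in `S`. -/
lemma zf_delete {W : Type u} {G : SimpleGraph W} {S : Set W} {u v0 : W}
    (hN : ∀ w, G.Adj u w → w = v0 ∨ w ∈ S)
    {x : W} (h : ZForced G S x) :
    ∀ hx : x ∈ {y | y ≠ u},
      ZForced (G.induce {y | y ≠ u}) {a : ↥{y | y ≠ u} | (a : W) ∈ S ∨ (a : W) = v0} ⟨x, hx⟩ := by
  induction h with
  | init h => exact fun hx => .init (Or.inl h)
  | @force p x hadj hp hws ihp ihws =>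
      intro hx
      by_cases hpu : p = u
      · subst hpu
        rcases hN x hadj with h | h
        · exact .init (Or.inr h)
        · exact .init (Or.inl h)
      · refine ZForced.force (u := ⟨p, hpu⟩) (by simpa using hadj) (ihp hpu) ?_
        rintro ⟨w, hwu⟩ hw hne
        exact ihws w (by simpa using hw) (fun h => hne (Subtype.ext h)) hwu

/-- The key "side lemma": a graph with a zero forcing set of size at most 2 all
of whose non-seed vertices have degree at least 3 has at most 2 vertices. -/
lemma side_lemma (n : ℕ) : ∀ (W : Type u) (G : SimpleGraph W) (S : Set W),
    Finite W → Nat.card W ≤ n →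
    (∀ v, ZForced G S v) → S.ncard ≤ 2 →
    (∀ v, v ∉ S → 3 ≤ (G.neighborSet v).ncard) → Nat.card W ≤ 2 := by
  induction n with
  | zero => exact fun W G S _ hc _ _ _ => hc.trans (by norm_num)
  | succ n ih =>
    intro W G S hfin hcard hzfs hS2 hdeg
    haveI := hfin
    by_contra hbig
    push_neg at hbig
    -- there is a vertex outside S
    have hSne : ∃ v, v ∉ S := by
      by_contra h
      push_neg at h
      have : S = Set.univ := Set.eq_univ_of_forall h
      rw [this, Set.ncard_univ] at hS2
      omega
    obtain ⟨w0, hw0⟩ := hSne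
    -- any vertex outside S forces card ≥ 4
    have hW4 : 4 ≤ Nat.card W := by
      have h3 := hdeg w0 hw0
      have hsub : G.neighborSet w0 ⊆ {w0}ᶜ := by
        intro x hx
        simp only [Set.mem_compl_iff, Set.mem_singleton_iff]
        rintro rfl
        exact G.irrefl hx
      have := Set.ncard_le_ncard hsub (Set.toFinite _)
      have hcompl := Set.ncard_add_ncard_compl ({w0} : Set W)
      rw [Set.ncard_singleton] at hcompl
      omega
    obtain ⟨u, v0, huS, hv0S, hadj, hN⟩ := ff ⟨w0, hw0, hzfs w0⟩
    -- delete u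
    set W' := ({y | y ≠ u} : Set W) with hW'
    set S' := ({a : ↥W' | (a : W) ∈ S ∨ (a : W) = v0} : Set ↥W') with hS'
    have hval : Function.Injective (Subtype.val : ↥W' → W) := Subtype.val_injective
    -- card of W'
    have hcardW' : Nat.card ↥W' + 1 = Nat.card W := by
      have h1 : W'.ncard + ({u} : Set W).ncard = Nat.card W := by
        have : W' = ({u} : Set W)ᶜ := by
          ext x; simp [hW', eq_comm]
        rw [this]
        rw [← Set.ncard_add_ncard_compl ({u} : Set W)]
        ring
      rw [Set.ncard_singleton] at h1
      rw [← h1, Nat.card_coe_set_eq]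
    -- ZFS of deleted graph
    have hzfs' : ∀ a : ↥W', ZForced (G.induce W') S' a := by
      rintro ⟨x, hxu⟩
      have hNor : ∀ w, G.Adj u w → w = v0 ∨ w ∈ S := fun w hw => by
        by_cases h : w = v0
        · exact Or.inl h
        · exact Or.inr (hN w hw h)
      exact zf_delete hNor (hzfs x) hxu
    -- card of S'
    have hS2' : S'.ncard ≤ 2 := by
      have himg : Subtype.val '' S' ⊆ (S \ {u}) ∪ {v0} := by
        rintro x ⟨⟨y, hyu⟩, hy, rfl⟩
        rcases hy with h | h
        · exact Or.inl ⟨h, hyu⟩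
        · exact Or.inr h
      have h1 : S'.ncard = (Subtype.val '' S').ncard :=
        (Set.ncard_image_of_injective _ hval).symm
      have h2 : ((S \ {u}) ∪ {v0}).ncard ≤ (S \ {u}).ncard + 1 := by
        have := Set.ncard_union_le (S \ {u}) ({v0} : Set W)
        simpa using this
      have h3 : (S \ {u}).ncard = S.ncard - 1 := Set.ncard_diff_singleton_of_mem huS
      have h4 : 1 ≤ S.ncard := (Set.ncard_pos (Set.toFinite S)).2 ⟨u, huS⟩
      have h5 := Set.ncard_le_ncard himg (Set.toFinite _)
      omega
    -- degrees in the deleted graph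
    have hdeg' : ∀ a : ↥W', a ∉ S' → 3 ≤ ((G.induce W').neighborSet a).ncard := by
      rintro ⟨x, hxu⟩ hxS'
      have hxS : x ∉ S := fun h => hxS' (Or.inl h)
      have hxv0 : x ≠ v0 := fun h => hxS' (Or.inr h)
      have hnadj : ¬ G.Adj u x := fun h => by
        rcases hN x h (fun he => hxv0 he) with h'
        exact hxS h'
      have himg : Subtype.val '' ((G.induce W').neighborSet ⟨x, hxu⟩) = G.neighborSet x := by
        ext w
        constructor
        · rintro ⟨⟨y, hyu⟩, hy, rfl⟩
          simpa using hy
        · intro hw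
          have hwu : w ≠ u := by
            rintro rfl
            exact hnadj (SimpleGraph.adj_symm _ hw)
          exact ⟨⟨w, hwu⟩, by simpa using hw, rfl⟩
      have := Set.ncard_image_of_injective ((G.induce W').neighborSet ⟨x, hxu⟩) hval
      rw [himg] at this
      rw [← this]
      exact hdeg x hxS
    have hfin' : Finite ↥W' := inferInstance
    have := ih ↥W' (G.induce W') S' hfin' (by omega) hzfs' hS2' hdeg'
    omega

end ZFAux

namespace ZFAux

/-- Restriction of a zero forcing set to one side of a cut, plus the side-lemma. -/
lemma killside {W : Type u} [Finite W] {G : SimpleGraph W} {B : Set W}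
    (hzfs : ∀ v, ZForced G B v) (X S : Set W)
    (hBS : ∀ v ∈ B, v ∈ X → v ∈ S)
    (hcross : ∀ v ∈ X, ∀ w, w ∉ X → G.Adj v w → v ∈ S)
    (hS2 : S.ncard ≤ 2)
    (hdeg : ∀ v, v ∈ X → v ∉ S → 3 ≤ (G.neighborSet v ∩ X).ncard) :
    X.ncard ≤ 2 := by
  set S' := ({a : ↥X | (a : W) ∈ S} : Set ↥X) with hS'
  have hval : Function.Injective (Subtype.val : ↥X → W) := Subtype.val_injective
  have hzfs' : ∀ a : ↥X, ZForced (G.induce X) S' a := by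
    rintro ⟨x, hx⟩
    refine zf_restrict ?_ ?_ (hzfs x) hx
    · exact fun v hv hB => hBS v hB hv
    · rintro v hv ⟨w, hwX, hadj⟩
      exact hcross v hv w hwX hadj
  have hS2' : S'.ncard ≤ 2 := by
    have himg : Subtype.val '' S' ⊆ S := by rintro x ⟨⟨y, hy⟩, h, rfl⟩; exact h
    have h1 : S'.ncard = (Subtype.val '' S').ncard :=
      (Set.ncard_image_of_injective _ hval).symm
    have h2 := Set.ncard_le_ncard himg (Set.toFinite _)
    omega
  have hdeg' : ∀ a : ↥X, a ∉ S' → 3 ≤ ((G.induce X).neighborSet a).ncard := by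
    rintro ⟨x, hx⟩ hxS'
    have hxS : x ∉ S := hxS'
    have himg : Subtype.val '' ((G.induce X).neighborSet ⟨x, hx⟩) = G.neighborSet x ∩ X := by
      ext w
      constructor
      · rintro ⟨⟨y, hy⟩, h, rfl⟩
        exact ⟨by simpa using h, hy⟩
      · rintro ⟨hw, hwX⟩
        exact ⟨⟨w, hwX⟩, by simpa using hw, rfl⟩
    have := Set.ncard_image_of_injective ((G.induce X).neighborSet ⟨x, hx⟩) hval
    rw [himg] at this
    rw [← this]
    exact hdeg x hx hxS
  have := side_lemma (Nat.card ↥X) ↥X (G.induce X) S' inferInstance le_rfl hzfs' hS2' hdeg'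
  rwa [Nat.card_coe_set_eq] at this

/-- A zero forcing set of size 3 cannot contain a vertex with no neighbor in the set,
in a graph of minimum degree 3. -/
lemma isolatedSeed {W : Type u} [Finite W] {G : SimpleGraph W}
    (hdeg : ∀ v, 3 ≤ (G.neighborSet v).ncard)
    {B : Set W} (hB3 : B.ncard = 3) (hzfs : ∀ v, ZForced G B v)
    {b : W} (hb : b ∈ B) (hiso : ∀ c, c ∈ B → ¬ G.Adj b c) : False := by
  -- b has a neighbor outside B
  have hnb : (G.neighborSet b).Nonempty := by
    apply Set.nonempty_of_ncard_ne_zero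
    have := hdeg b
    omega
  obtain ⟨w, hw⟩ := hnb
  have hwB : w ∉ B := fun h => hiso w h hw
  obtain ⟨u, v0, huB, hv0B, hadj, hN⟩ := ff ⟨w, hwB, hzfs w⟩
  by_cases hub : u = b
  · subst hub
    -- N(u) ⊆ {v0}
    have hsub : G.neighborSet u ⊆ {v0} := by
      intro x hx
      by_contra hxv
      exact hiso x (hN x hx (by simpa using hxv)) hx
    have := Set.ncard_le_ncard hsub (Set.toFinite _)
    have := hdeg u
    simp only [Set.ncard_singleton] at *
    omega
  · -- N(u) ⊆ insert v0 (B \ {u, b})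
    have hsub : G.neighborSet u ⊆ insert v0 (B \ {u, b}) := by
      intro x hx
      by_cases hxv : x = v0
      · exact Or.inl hxv
      · have hxB := hN x hx hxv
        refine Or.inr ⟨hxB, ?_⟩
        simp only [Set.mem_insert_iff, Set.mem_singleton_iff]
        push_neg
        constructor
        · rintro rfl; exact G.irrefl hx
        · rintro rfl; exact hiso u huB hx.symm
    have h1 := Set.ncard_le_ncard hsub (Set.toFinite _)
    have h2 : (insert v0 (B \ {u, b})).ncard ≤ (B \ {u, b}).ncard + 1 :=
      Set.ncard_insert_le _ _
    have h3 : (B \ {u, b}).ncard = B.ncard - ({u, b} : Set W).ncard := by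
      apply Set.ncard_diff
      · rintro x (rfl | rfl)
        · exact huB
        · exact hb
      · exact Set.toFinite _
    have h4 : ({u, b} : Set W).ncard = 2 := Set.ncard_pair hub
    have := hdeg u
    omega

end ZFAux

namespace ZFAux

lemma crossCount {W : Type u} [Finite W] {G : SimpleGraph W}
    {X : Set W} {F : Finset (Sym2 W)}
    (hcrossF : ∀ v ∈ X, ∀ w, w ∉ X → G.Adj v w → s(v, w) ∈ F)
    {v : W} (hv : v ∈ X) :
    ((G.neighborSet v) \ X).ncard ≤ F.card := by
  have himg : (fun w => s(v, w)) '' ((G.neighborSet v) \ X) ⊆ (↑F : Set (Sym2 W)) := by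
    rintro e ⟨w, ⟨hw, hwX⟩, rfl⟩
    exact hcrossF v hv w hwX hw
  have hinj : Set.InjOn (fun w => s(v, w)) ((G.neighborSet v) \ X) := by
    intro a _ b _ hab
    simpa using (Sym2.congr_right).1 hab
  have := Set.ncard_le_ncard_of_injOn _ (fun a ha => himg ⟨a, ha, rfl⟩) hinj (Set.toFinite _)
  rwa [Set.ncard_coe_finset] at this

lemma sideSize {W : Type u} [Finite W] {G : SimpleGraph W}
    (hdeg : ∀ v, 3 ≤ (G.neighborSet v).ncard)
    (X : Set W) (F : Finset (Sym2 W)) (hF : F.card ≤ 2)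
    (hcrossF : ∀ v ∈ X, ∀ w, w ∉ X → G.Adj v w → s(v, w) ∈ F)
    (hne : X.Nonempty) : 3 ≤ X.ncard := by
  by_contra hX
  push_neg at hX
  have hXpos : 1 ≤ X.ncard := (Set.ncard_pos (Set.toFinite X)).2 hne
  -- for v ∈ X, the set of cross-neighbors is large
  have hcr : ∀ v ∈ X, 3 + 1 ≤ X.ncard + ((G.neighborSet v) \ X).ncard := by
    intro v hv
    have hsub : G.neighborSet v ⊆ (X \ {v}) ∪ ((G.neighborSet v) \ X) := by
      intro x hx
      by_cases hxX : x ∈ X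
      · exact Or.inl ⟨hxX, fun h => G.irrefl (h ▸ hx)⟩
      · exact Or.inr ⟨hx, hxX⟩
    have h1 := Set.ncard_le_ncard hsub (Set.toFinite _)
    have h2 := Set.ncard_union_le (X \ {v}) ((G.neighborSet v) \ X)
    have h3 : (X \ {v}).ncard = X.ncard - 1 := Set.ncard_diff_singleton_of_mem hv
    have := hdeg v
    omega
  interval_cases h : X.ncard
  · -- X.ncard = 1
    obtain ⟨v, hvX⟩ := hne
    have := hcr v hvX
    have := crossCount hcrossF hvX
    omega
  · -- X.ncard = 2
    obtain ⟨a, b, hab, hXab⟩ := Set.ncard_eq_two.1 h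
    have haX : a ∈ X := by rw [hXab]; exact Or.inl rfl
    have hbX : b ∈ X := by rw [hXab]; exact Or.inr rfl
    have hca := hcr a haX
    have hcb := hcr b hbX
    -- the two image sets in F are disjoint
    set Ia := (fun w => s(a, w)) '' ((G.neighborSet a) \ X) with hIa
    set Ib := (fun w => s(b, w)) '' ((G.neighborSet b) \ X) with hIb
    have hIaF : Ia ⊆ (↑F : Set (Sym2 W)) := by
      rintro e ⟨w, ⟨hw, hwX⟩, rfl⟩; exact hcrossF a haX w hwX hw
    have hIbF : Ib ⊆ (↑F : Set (Sym2 W)) := by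
      rintro e ⟨w, ⟨hw, hwX⟩, rfl⟩; exact hcrossF b hbX w hwX hw
    have hdisj : Disjoint Ia Ib := by
      rw [Set.disjoint_left]
      rintro e ⟨w, ⟨hw, hwX⟩, rfl⟩ ⟨w', ⟨hw', hwX'⟩, he⟩
      rcases Sym2.eq_iff.1 he with ⟨h1, h2⟩ | ⟨h1, h2⟩
      · exact hab h1.symm
      · exact hwX' (h2 ▸ haX)
    have hIacard : Ia.ncard = ((G.neighborSet a) \ X).ncard :=
      Set.ncard_image_of_injOn (fun x _ y _ hxy => by simpa using (Sym2.congr_right).1 hxy)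
    have hIbcard : Ib.ncard = ((G.neighborSet b) \ X).ncard :=
      Set.ncard_image_of_injOn (fun x _ y _ hxy => by simpa using (Sym2.congr_right).1 hxy)
    have hunion : (Ia ∪ Ib).ncard = Ia.ncard + Ib.ncard :=
      Set.ncard_union_eq hdisj (Set.toFinite _) (Set.toFinite _)
    have hle : (Ia ∪ Ib).ncard ≤ F.card := by
      have := Set.ncard_le_ncard (Set.union_subset hIaF hIbF) (Set.toFinite _)
      rwa [Set.ncard_coe_finset] at this
    omega

end ZFAux

namespace ZFAux

lemma surv {W : Type u} [Finite W] {G : SimpleGraph W}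
    (hdeg : ∀ v, 3 ≤ (G.neighborSet v).ncard)
    {B : Set W} (hB3 : B.ncard = 3) (hzfs : ∀ v, ZForced G B v)
    (Z EZ : Set W) (hEZ : ∀ v ∈ Z, ∀ w, w ∉ Z → G.Adj v w → v ∈ EZ)
    (h1 : (B ∩ Z).ncard = 1) (hbig : 3 ≤ ((B ∩ Z) ∪ EZ).ncard)
    (hEZ2 : EZ.ncard ≤ 2) : False := by
  obtain ⟨b, hbZ⟩ := Set.ncard_eq_one.1 h1
  have hbB : b ∈ B := by
    have : b ∈ B ∩ Z := hbZ ▸ rfl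
    exact this.1
  have hbX : b ∈ Z := by
    have : b ∈ B ∩ Z := hbZ ▸ rfl
    exact this.2
  have hbEZ : b ∉ EZ := by
    intro hbE
    have : (B ∩ Z) ∪ EZ = EZ := by
      rw [hbZ]
      exact Set.union_eq_self_of_subset_left (Set.singleton_subset_iff.2 hbE)
    rw [this] at hbig
    omega
  have hbnbr : ∀ w, G.Adj b w → w ∈ Z := by
    intro w hw
    by_contra hwZ
    exact hbEZ (hEZ b hbX w hwZ hw)
  have hiso : ∀ c, c ∈ B → ¬ G.Adj b c := by
    intro c hc hadj
    have hcZ : c ∈ Z := hbnbr c hadj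
    have : c ∈ B ∩ Z := ⟨hc, hcZ⟩
    rw [hbZ] at this
    rw [this] at hadj
    exact G.irrefl hadj
  exact isolatedSeed hdeg hB3 hzfs hbB hiso

lemma main_cut {W : Type u} [Finite W] {G : SimpleGraph W}
    (hdeg : ∀ v, 3 ≤ (G.neighborSet v).ncard)
    {B : Set W} (hB3 : B.ncard = 3) (hzfs : ∀ v, ZForced G B v)
    {X : Set W} {F : Finset (Sym2 W)} (hF : F.card ≤ 2)
    (hcrossF : ∀ v ∈ X, ∀ w, w ∉ X → G.Adj v w → s(v, w) ∈ F)
    (hneX : X.Nonempty) (hneY : Xᶜ.Nonempty) : False := by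
  -- symmetric cross fact
  have hcrossF' : ∀ v ∈ Xᶜ, ∀ w, w ∉ Xᶜ → G.Adj v w → s(v, w) ∈ F := by
    intro v hv w hw hadj
    rw [Set.notMem_compl_iff] at hw
    have := hcrossF w hw v hv hadj.symm
    rwa [Sym2.eq_swap] at this
  -- sizes
  have hX3 : 3 ≤ X.ncard := sideSize hdeg X F hF hcrossF hneX
  have hY3 : 3 ≤ Xᶜ.ncard := sideSize hdeg Xᶜ F hF hcrossF' hneY
  -- boundary sets
  set CP := ({p : W × W | p.1 ∈ X ∧ p.2 ∉ X ∧ G.Adj p.1 p.2} : Set (W × W)) with hCP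
  have hCP2 : CP.ncard ≤ 2 := by
    have hinj : Set.InjOn (fun p : W × W => s(p.1, p.2)) CP := by
      rintro ⟨a, b⟩ ⟨ha, hb, _⟩ ⟨c, d⟩ ⟨hc, hd, _⟩ he
      simp only at he
      rcases Sym2.eq_iff.1 he with ⟨h1, h2⟩ | ⟨h1, h2⟩
      · rw [h1, h2]
      · exact absurd (h1 ▸ ha) hd
    have hmap : ∀ p ∈ CP, s(p.1, p.2) ∈ (↑F : Set (Sym2 W)) := by
      rintro ⟨a, b⟩ ⟨ha, hb, hadj⟩
      exact hcrossF a ha b hb hadj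
    have := Set.ncard_le_ncard_of_injOn _ hmap hinj (Set.toFinite _)
    rw [Set.ncard_coe_finset] at this
    omega
  set EX := (Prod.fst '' CP : Set W) with hEX
  set EY := (Prod.snd '' CP : Set W) with hEY
  have hEX2 : EX.ncard ≤ 2 := le_trans (Set.ncard_image_le (Set.toFinite _)) hCP2
  have hEY2 : EY.ncard ≤ 2 := le_trans (Set.ncard_image_le (Set.toFinite _)) hCP2
  have hEXmem : ∀ v ∈ X, ∀ w, w ∉ X → G.Adj v w → v ∈ EX := by
    intro v hv w hw hadj
    exact ⟨(v, w), ⟨hv, hw, hadj⟩, rfl⟩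
  have hEYmem : ∀ v ∈ Xᶜ, ∀ w, w ∉ Xᶜ → G.Adj v w → v ∈ EY := by
    intro v hv w hw hadj
    rw [Set.notMem_compl_iff] at hw
    exact ⟨(w, v), ⟨hw, hv, hadj.symm⟩, rfl⟩
  -- kill a side if its seed set is small
  have kill : ∀ (Z EZ' : Set W), (∀ v ∈ Z, ∀ w, w ∉ Z → G.Adj v w → v ∈ EZ') →
      EZ' ⊆ Z → ((B ∩ Z) ∪ EZ').ncard ≤ 2 → Z.ncard ≤ 2 := by
    intro Z EZ' hEZmem hEZsub hsmall
    refine killside hzfs Z ((B ∩ Z) ∪ EZ') (fun v hv hvZ => Or.inl ⟨hv, hvZ⟩)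
      (fun v hv w hw hadj => Or.inr (hEZmem v hv w hw hadj)) hsmall ?_
    intro v hvZ hvS
    have hnbr : G.neighborSet v ⊆ Z := by
      intro w hw
      by_contra hwZ
      exact hvS (Or.inr (hEZmem v hvZ w hwZ hw))
    rw [Set.inter_eq_self_of_subset_left hnbr]
    exact hdeg v
  have hEXsub : EX ⊆ X := by rintro v ⟨⟨a, b⟩, ⟨ha, _, _⟩, rfl⟩; exact ha
  have hEYsub : EY ⊆ Xᶜ := by rintro v ⟨⟨a, b⟩, ⟨_, hb, _⟩, rfl⟩; exact hb
  by_cases hSX : ((B ∩ X) ∪ EX).ncard ≤ 2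
  · have := kill X EX hEXmem hEXsub hSX
    omega
  by_cases hSY : ((B ∩ Xᶜ) ∪ EY).ncard ≤ 2
  · have := kill Xᶜ EY hEYmem hEYsub hSY
    omega
  push_neg at hSX hSY
  -- seed counts on both sides
  have hsplit : (B ∩ X).ncard + (B ∩ Xᶜ).ncard = 3 := by
    have : B ∩ Xᶜ = B \ X := by rw [Set.diff_eq]
    rw [this, ← hB3]
    exact Set.ncard_inter_add_ncard_diff_eq_ncard B X (Set.toFinite _)
  have hbX1 : 1 ≤ (B ∩ X).ncard := by
    have := Set.ncard_union_le (B ∩ X) EX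
    omega
  have hbY1 : 1 ≤ (B ∩ Xᶜ).ncard := by
    have := Set.ncard_union_le (B ∩ Xᶜ) EY
    omega
  rcases Nat.lt_or_ge (B ∩ X).ncard 2 with h | h
  · exact surv hdeg hB3 hzfs X EX hEXmem (by omega) (by omega) hEX2
  · exact surv hdeg hB3 hzfs Xᶜ EY hEYmem (by omega) (by omega) hEY2

end ZFAux

/-- If `G` is connected with minimum degree at least `3` and `Z(G) = 3`, then
the edge connectivity of `G` is at least `3`. -/
theorem three_le_edgeConnectivity_of_zeroForcingNumber_eq_three
    {V : Type*} [Fintype V] [DecidableEq V]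
    (G : SimpleGraph V) [DecidableRel G.Adj]
    (hconn : G.Connected) (hdeg : ∀ v : V, 3 ≤ G.degree v)
    (hZ : zeroForcingNumber G = 3) :
    3 ≤ edgeConnectivity G := by
  haveI : Nonempty V := hconn.nonempty
  -- min-degree in ncard form
  have hdeg' : ∀ v : V, 3 ≤ (G.neighborSet v).ncard := by
    intro v
    rw [← Nat.card_coe_set_eq, Nat.card_eq_fintype_card,
      SimpleGraph.card_neighborSet_eq_degree]
    exact hdeg v
  -- extract a zero forcing set of size 3
  have hZne : {k : ℕ | ∃ Z : Finset V, Z.card = k ∧ IsZeroForcingSet G ↑Z}.Nonempty := by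
    exact ⟨(Finset.univ : Finset V).card, Finset.univ, rfl,
      fun v => .init (by simp)⟩
  have hmem := Nat.sInf_mem hZne
  rw [show sInf {k : ℕ | ∃ Z : Finset V, Z.card = k ∧ IsZeroForcingSet G ↑Z}
      = zeroForcingNumber G from rfl, hZ] at hmem
  obtain ⟨B, hB3, hBzfs⟩ := hmem
  have hB3' : (↑B : Set V).ncard = 3 := by rw [Set.ncard_coe_finset, hB3]
  -- the defining set for edge connectivity is nonempty
  set ECset := {k : ℕ | ∃ F : Finset (Sym2 V), F.card = k ∧ ↑F ⊆ G.edgeSet ∧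
    ¬(G.deleteEdges ↑F).Connected} with hECset
  have hECne : ECset.Nonempty := by
    obtain ⟨v₀⟩ := (inferInstance : Nonempty V)
    refine ⟨(G.incidenceFinset v₀).card, G.incidenceFinset v₀, rfl, ?_, ?_⟩
    · intro e he
      rw [Finset.mem_coe, SimpleGraph.mem_incidenceFinset] at he
      exact G.incidenceSet_subset v₀ he
    · intro hc
      -- v₀ has a neighbor
      have hnb : (G.neighborSet v₀).Nonempty := by
        apply Set.nonempty_of_ncard_ne_zero
        have := hdeg' v₀
        omega
      obtain ⟨w, hw⟩ := hnb
      have hwv : w ≠ v₀ := fun h => G.irrefl (h ▸ hw)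
      obtain ⟨p⟩ := hc.preconnected v₀ w
      cases p with
      | nil => exact hwv rfl
      | cons h q =>
          rw [SimpleGraph.deleteEdges_adj] at h
          refine h.2 ?_
          rw [Finset.mem_coe, SimpleGraph.mem_incidenceFinset]
          exact G.mk'_mem_incidenceSet_left_iff.2 h.1
  refine le_csInf hECne ?_
  rintro k ⟨F, hFcard, hFsub, hFdisc⟩
  by_contra hlt
  push_neg at hlt
  have hF2 : F.card ≤ 2 := by omega
  -- get the two sides
  rw [SimpleGraph.connected_iff] at hFdisc
  push_neg at hFdisc
  have hnpre : ¬ (G.deleteEdges ↑F).Preconnected := fun h => isEmpty_iff.1 (hFdisc h) Classical.ofNonempty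
  simp only [SimpleGraph.Preconnected] at hnpre
  push_neg at hnpre
  obtain ⟨p, q, hpq⟩ := hnpre
  set X := {v : V | (G.deleteEdges ↑F).Reachable p v} with hX
  have hcrossF : ∀ v ∈ X, ∀ w, w ∉ X → G.Adj v w → s(v, w) ∈ F := by
    intro v hv w hw hadj
    by_contra hmem
    apply hw
    have hadj' : (G.deleteEdges ↑F).Adj v w := by
      rw [SimpleGraph.deleteEdges_adj]
      exact ⟨hadj, by rwa [Finset.mem_coe]⟩
    exact hv.trans hadj'.reachable
  exact ZFAux.main_cut hdeg' hB3' hBzfs hF2 hcrossF ⟨p, SimpleGraph.Reachable.refl p⟩ ⟨q, hpq⟩
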